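/- Let h:𝕏_T→ℝ be measurable with ∫_{𝕏_T}|h(s,x)|² ν_T(ds,dx)<∞, and suppose that for every δ>0 and every measurable E⊆𝕏_T with ν_T(E)<∞ one has ∫_E exp(δ|h(s,x)|) ν_T(ds,dx)<∞. Fix N∈ℕ. Then for every η>0 there exists δ>0 such that for every Borel set A⊆[0,T] with Lebesgue measure λ_T(A)<δ one has sup_{g∈S^N} ∫_A ∫_𝕏 |h(s,x)|·|g(s,x)−1| ν(dx) ds ≤ η. -/

import Mathlib

open MeasureTheory Real Filter
open scoped ENNReal

private lemma young_aux {u v : ℝ} (hv : 0 ≤ v) :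
    u * v ≤ Real.exp u + v * Real.log v - v := by
  rcases hv.eq_or_lt with rfl | hv'
  · simpa using (Real.exp_pos u).le
  · have h1 : (u - Real.log v) + 1 ≤ Real.exp (u - Real.log v) := Real.add_one_le_exp _
    have h2 : Real.exp (u - Real.log v) = Real.exp u / v := by
      rw [Real.exp_sub, Real.exp_log hv']
    have h3 : v * ((u - Real.log v) + 1) ≤ Real.exp u := by
      calc v * ((u - Real.log v) + 1) ≤ v * (Real.exp u / v) := by
            rw [← h2]; exact mul_le_mul_of_nonneg_left h1 hv'.le
        _ = Real.exp u := by field_simp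
    nlinarith [h3]

private lemma l_nonneg {b : ℝ} (hb : 0 ≤ b) : 0 ≤ b * Real.log b - b + 1 := by
  rcases hb.eq_or_lt with rfl | hb'
  · simp
  · have h1 : Real.log b⁻¹ ≤ b⁻¹ - 1 := Real.log_le_sub_one_of_pos (inv_pos.mpr hb')
    rw [Real.log_inv] at h1
    have h2 : b * (-Real.log b) ≤ b * (b⁻¹ - 1) := mul_le_mul_of_nonneg_left h1 hb'.le
    have h3 : b * b⁻¹ = 1 := mul_inv_cancel₀ hb'.ne'
    nlinarith [h2, h3]

private lemma lemA {x b : ℝ} (hx : 0 ≤ x) (hb : 0 ≤ b) :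
    x * |b - 1| ≤ (b * Real.log b - b + 1) + (Real.exp x - x - 1) := by
  rcases le_or_gt 1 b with hb1 | hb1
  · rw [abs_of_nonneg (by linarith)]
    have := young_aux (u := x) hb
    linarith
  · rw [abs_of_neg (by linarith)]
    have hy := young_aux (u := -x) hb
    have hs : x ≤ Real.sinh x := by
      rcases hx.eq_or_lt with rfl | hx'
      · simp
      · exact (Real.self_lt_sinh_iff.mpr hx').le
    rw [Real.sinh_eq] at hs
    nlinarith [hy, hs]

private lemma lemB {t : ℝ} (ht : 0 ≤ t) :
    Real.exp t - t - 1 ≤ t ^ 2 * Real.exp t := by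
  rcases le_or_gt t 1 with h1 | h1
  · have h := Real.add_one_le_exp (-t)
    have h2 : Real.exp t * Real.exp (-t) = 1 := by
      rw [← Real.exp_add]; simp
    nlinarith [Real.exp_pos t, mul_le_mul_of_nonneg_left h (Real.exp_pos t).le]
  · nlinarith [Real.exp_pos t,
      mul_pos (show (0:ℝ) < t ^ 2 - 1 by nlinarith) (Real.exp_pos t)]

private lemma lem2a {a b σ : ℝ} (ha : 0 ≤ a) (ha1 : a ≤ 1) (hb : 0 ≤ b) (hσ : 1 ≤ σ) :
    a * |b - 1| ≤ σ⁻¹ * (b * Real.log b - b + 1) + σ * Real.exp σ * a ^ 2 := by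
  have hσ0 : 0 < σ := lt_of_lt_of_le one_pos hσ
  have hx : 0 ≤ σ * a := mul_nonneg hσ0.le ha
  have key := lemA (x := σ * a) hx hb
  have hB := lemB (t := σ * a) hx
  have hexple : Real.exp (σ * a) ≤ Real.exp σ :=
    Real.exp_le_exp.mpr (by nlinarith)
  have h4 : Real.exp (σ * a) - σ * a - 1 ≤ σ ^ 2 * Real.exp σ * a ^ 2 := by
    calc Real.exp (σ * a) - σ * a - 1 ≤ (σ * a) ^ 2 * Real.exp (σ * a) := hB
      _ ≤ (σ * a) ^ 2 * Real.exp σ := by nlinarith [sq_nonneg (σ * a)]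
      _ = σ ^ 2 * Real.exp σ * a ^ 2 := by ring
  have key2 : σ * (a * |b - 1|) ≤ (b * Real.log b - b + 1) + σ ^ 2 * Real.exp σ * a ^ 2 := by
    nlinarith [key, h4]
  have h5 := mul_le_mul_of_nonneg_left key2 (inv_nonneg.mpr hσ0.le)
  have h6 : σ⁻¹ * (σ * (a * |b - 1|)) = a * |b - 1| := by field_simp
  have h7 : σ⁻¹ * ((b * Real.log b - b + 1) + σ ^ 2 * Real.exp σ * a ^ 2)
      = σ⁻¹ * (b * Real.log b - b + 1) + σ * Real.exp σ * a ^ 2 := by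
    field_simp
  rw [h6, h7] at h5
  exact h5

private lemma lem2b {a b σ : ℝ} (ha : 0 ≤ a) (hb : 0 ≤ b) (hσ : 1 ≤ σ) :
    a * |b - 1| ≤ σ⁻¹ * (b * Real.log b - b + 1) + Real.exp (σ * a) := by
  have hσ0 : 0 < σ := lt_of_lt_of_le one_pos hσ
  have hx : 0 ≤ σ * a := mul_nonneg hσ0.le ha
  have key := lemA (x := σ * a) hx hb
  have key2 : σ * (a * |b - 1|) ≤ (b * Real.log b - b + 1) + Real.exp (σ * a) := by
    nlinarith [key]
  have h5 := mul_le_mul_of_nonneg_left key2 (inv_nonneg.mpr hσ0.le)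
  have h6 : σ⁻¹ * (σ * (a * |b - 1|)) = a * |b - 1| := by field_simp
  rw [h6] at h5
  have hinv1 : σ⁻¹ ≤ 1 := by
    rw [inv_le_one_iff₀]; right; exact hσ
  calc a * |b - 1| ≤ σ⁻¹ * ((b * Real.log b - b + 1) + Real.exp (σ * a)) := h5
    _ = σ⁻¹ * (b * Real.log b - b + 1) + σ⁻¹ * Real.exp (σ * a) := by ring
    _ ≤ σ⁻¹ * (b * Real.log b - b + 1) + Real.exp (σ * a) := by
        have := Real.exp_pos (σ * a)
        nlinarith

theorem stmt_4
    {𝕏 : Type*} [TopologicalSpace 𝕏] [PolishSpace 𝕏] [LocallyCompactSpace 𝕏]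
    [MeasurableSpace 𝕏] [BorelSpace 𝕏]
    (T : ℝ) (hT : 0 < T)
    (ν : Measure 𝕏) [SigmaFinite ν] (hνK : ∀ Kc : Set 𝕏, IsCompact Kc → ν Kc < ⊤)
    (νT : Measure (ℝ × 𝕏)) (hνT : νT = (volume.restrict (Set.Icc 0 T)).prod ν)
    (h : ℝ × 𝕏 → ℝ) (hm : Measurable h)
    (hL2 : ∫⁻ q, ENNReal.ofReal (|h q| ^ 2) ∂νT < ⊤)
    (hexp : ∀ δ : ℝ, 0 < δ → ∀ E : Set (ℝ × 𝕏), MeasurableSet E → νT E < ⊤ →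
        ∫⁻ q in E, ENNReal.ofReal (Real.exp (δ * |h q|)) ∂νT < ⊤)
    (N : ℕ) :
    ∀ η : ℝ, 0 < η → ∃ δ : ℝ, 0 < δ ∧
      ∀ A : Set ℝ, MeasurableSet A → A ⊆ Set.Icc 0 T → volume A < ENNReal.ofReal δ →
        ∀ g ∈ {g : ℝ × 𝕏 → ℝ | Measurable g ∧ (∀ q, 0 ≤ g q) ∧
            ∫⁻ q, ENNReal.ofReal (g q * Real.log (g q) - g q + 1) ∂νT ≤ (N : ℝ≥0∞)},
          ∫⁻ q in A ×ˢ (Set.univ : Set 𝕏), ENNReal.ofReal (|h q| * |g q - 1|) ∂νT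
            ≤ ENNReal.ofReal η := by
  intro η hη
  set σ : ℝ := 1 + 2 * (N : ℝ) / η with hσdef
  have hσ1 : 1 ≤ σ := le_add_of_nonneg_right (by positivity)
  have hσ0 : 0 < σ := lt_of_lt_of_le one_pos hσ1
  set F : Set (ℝ × 𝕏) := {q | 1 < |h q|} with hFdef
  have hFm : MeasurableSet F := measurableSet_lt measurable_const hm.abs
  have hFfin : νT F < ⊤ := by
    have hle : ∀ q ∈ F, (1 : ℝ≥0∞) ≤ ENNReal.ofReal (|h q| ^ 2) := by
      intro q hq
      rw [ENNReal.one_le_ofReal]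
      have : (1 : ℝ) < |h q| := hq
      nlinarith
    calc νT F = ∫⁻ _ in F, 1 ∂νT := (setLIntegral_one F).symm
      _ ≤ ∫⁻ q in F, ENNReal.ofReal (|h q| ^ 2) ∂νT := setLIntegral_mono' hFm hle
      _ ≤ ∫⁻ q, ENNReal.ofReal (|h q| ^ 2) ∂νT := setLIntegral_le_lintegral _ _
      _ < ⊤ := hL2
  have hK : ∫⁻ q in F, ENNReal.ofReal (Real.exp (σ * |h q|)) ∂νT < ⊤ :=
    hexp σ hσ0 F hFm hFfin
  set ρ : ℝ × 𝕏 → ℝ≥0∞ := fun q => ENNReal.ofReal (σ * Real.exp σ * |h q| ^ 2)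
      + F.indicator (fun q => ENNReal.ofReal (Real.exp (σ * |h q|))) q with hρdef
  have hρmeas : Measurable ρ := by
    apply Measurable.fun_add
    · exact (measurable_const.mul (hm.abs.pow measurable_const)).ennreal_ofReal
    · exact Measurable.indicator ((measurable_const.mul hm.abs).exp.ennreal_ofReal) hFm
  have hρfin : ∫⁻ q, ρ q ∂νT < ⊤ := by
    rw [hρdef]; beta_reduce; rw [lintegral_add_left
      ((measurable_const.fun_mul (hm.abs.pow measurable_const)).ennreal_ofReal)]
    apply ENNReal.add_lt_top.mpr
    constructor
    · have heq : ∀ q : ℝ × 𝕏, ENNReal.ofReal (σ * Real.exp σ * |h q| ^ 2)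
          = ENNReal.ofReal (σ * Real.exp σ) * ENNReal.ofReal (|h q| ^ 2) := fun q =>
        ENNReal.ofReal_mul (by positivity)
      simp_rw [heq]
      rw [lintegral_const_mul' _ _ ENNReal.ofReal_ne_top]
      exact ENNReal.mul_lt_top ENNReal.ofReal_lt_top hL2
    · rw [lintegral_indicator hFm]
      exact hK
  set Φ : ℝ → ℝ≥0∞ := fun s => ∫⁻ x, ρ (s, x) ∂ν with hΦdef
  have hΦint : ∫⁻ s in Set.Icc (0 : ℝ) T, Φ s ∂volume ≠ ⊤ := by
    have heq : ∫⁻ s in Set.Icc (0 : ℝ) T, Φ s ∂volume = ∫⁻ q, ρ q ∂νT := by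
      rw [hνT, MeasureTheory.lintegral_prod ρ hρmeas.aemeasurable]
    rw [heq]
    exact hρfin.ne
  obtain ⟨δ₁, hδ₁pos, hδ₁⟩ := exists_pos_setLIntegral_lt_of_measure_lt hΦint
    (ε := ENNReal.ofReal (η / 2)) (ENNReal.ofReal_pos.mpr (half_pos hη)).ne'
  refine ⟨(min δ₁ 1).toReal, ENNReal.toReal_pos (lt_min hδ₁pos zero_lt_one).ne'
    (lt_of_le_of_lt (min_le_right _ _) ENNReal.one_lt_top).ne, ?_⟩
  intro A hAm hAsub hAvol g hg
  obtain ⟨hgm, hg0, hgN⟩ := hg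
  -- smallness of A for the restricted measure
  have hAsmall : (volume.restrict (Set.Icc (0 : ℝ) T)) A < δ₁ := by
    calc (volume.restrict (Set.Icc (0 : ℝ) T)) A ≤ volume A := by
          rw [Measure.restrict_apply hAm]
          exact measure_mono Set.inter_subset_left
      _ < ENNReal.ofReal (min δ₁ 1).toReal := hAvol
      _ = min δ₁ 1 := ENNReal.ofReal_toReal
          (lt_of_le_of_lt (min_le_right _ _) ENNReal.one_lt_top).ne
      _ ≤ δ₁ := min_le_left _ _
  have hsmall := hδ₁ A hAsmall
  have hrr : (volume.restrict (Set.Icc (0 : ℝ) T)).restrict A = volume.restrict A := by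
    rw [Measure.restrict_restrict hAm, Set.inter_eq_self_of_subset_left hAsub]
  -- pointwise bound
  have hpt : ∀ q : ℝ × 𝕏, ENNReal.ofReal (|h q| * |g q - 1|)
      ≤ ENNReal.ofReal (σ⁻¹ * (g q * Real.log (g q) - g q + 1)) + ρ q := by
    intro q
    by_cases hq : q ∈ F
    · have hb := lem2b (a := |h q|) (b := g q) (abs_nonneg _) (hg0 q) hσ1
      calc ENNReal.ofReal (|h q| * |g q - 1|)
          ≤ ENNReal.ofReal (σ⁻¹ * (g q * Real.log (g q) - g q + 1) + Real.exp (σ * |h q|)) :=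
            ENNReal.ofReal_le_ofReal hb
        _ ≤ ENNReal.ofReal (σ⁻¹ * (g q * Real.log (g q) - g q + 1))
            + ENNReal.ofReal (Real.exp (σ * |h q|)) := ENNReal.ofReal_add_le
        _ ≤ ENNReal.ofReal (σ⁻¹ * (g q * Real.log (g q) - g q + 1)) + ρ q := by
            refine add_le_add_right ?_ _
            rw [hρdef]
            simp only [Set.indicator_of_mem hq]
            exact le_add_self
    · have hq1 : |h q| ≤ 1 := not_lt.mp hq
      have hb := lem2a (a := |h q|) (b := g q) (abs_nonneg _) hq1 (hg0 q) hσ1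
      calc ENNReal.ofReal (|h q| * |g q - 1|)
          ≤ ENNReal.ofReal (σ⁻¹ * (g q * Real.log (g q) - g q + 1)
              + σ * Real.exp σ * |h q| ^ 2) := ENNReal.ofReal_le_ofReal hb
        _ ≤ ENNReal.ofReal (σ⁻¹ * (g q * Real.log (g q) - g q + 1))
            + ENNReal.ofReal (σ * Real.exp σ * |h q| ^ 2) := ENNReal.ofReal_add_le
        _ ≤ ENNReal.ofReal (σ⁻¹ * (g q * Real.log (g q) - g q + 1)) + ρ q := by
            refine add_le_add_right ?_ _
            rw [hρdef]
            exact le_add_right le_rfl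
  have hf1meas : Measurable fun q : ℝ × 𝕏 =>
      ENNReal.ofReal (σ⁻¹ * (g q * Real.log (g q) - g q + 1)) :=
    (measurable_const.mul (((hgm.mul hgm.log).sub hgm).add measurable_const)).ennreal_ofReal
  -- bound for the l(g) part
  have hI1 : ∫⁻ q in A ×ˢ (Set.univ : Set 𝕏),
      ENNReal.ofReal (σ⁻¹ * (g q * Real.log (g q) - g q + 1)) ∂νT
      ≤ ENNReal.ofReal (η / 2) := by
    have heq : ∀ q : ℝ × 𝕏, ENNReal.ofReal (σ⁻¹ * (g q * Real.log (g q) - g q + 1))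
        = ENNReal.ofReal σ⁻¹ * ENNReal.ofReal (g q * Real.log (g q) - g q + 1) := fun q =>
      ENNReal.ofReal_mul (by positivity)
    calc ∫⁻ q in A ×ˢ (Set.univ : Set 𝕏),
          ENNReal.ofReal (σ⁻¹ * (g q * Real.log (g q) - g q + 1)) ∂νT
        ≤ ∫⁻ q, ENNReal.ofReal (σ⁻¹ * (g q * Real.log (g q) - g q + 1)) ∂νT :=
          setLIntegral_le_lintegral _ _
      _ = ENNReal.ofReal σ⁻¹ * ∫⁻ q, ENNReal.ofReal (g q * Real.log (g q) - g q + 1) ∂νT := by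
          simp_rw [heq]
          exact lintegral_const_mul' _ _ ENNReal.ofReal_ne_top
      _ ≤ ENNReal.ofReal σ⁻¹ * (N : ℝ≥0∞) := mul_le_mul_right hgN _
      _ ≤ ENNReal.ofReal (η / 2) := by
          rw [← ENNReal.ofReal_natCast N, ← ENNReal.ofReal_mul (by positivity)]
          apply ENNReal.ofReal_le_ofReal
          have hmul : σ * (η / 2) = η / 2 + (N : ℝ) := by
            rw [hσdef]; field_simp
          rw [inv_mul_le_iff₀ hσ0]
          linarith
  -- bound for the ρ part
  have hI2 : ∫⁻ q in A ×ˢ (Set.univ : Set 𝕏), ρ q ∂νT ≤ ENNReal.ofReal (η / 2) := by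
    have hres : νT.restrict (A ×ˢ (Set.univ : Set 𝕏)) = (volume.restrict A).prod ν := by
      rw [hνT, ← Measure.restrict_prod_eq_prod_univ, hrr]
    calc ∫⁻ q in A ×ˢ (Set.univ : Set 𝕏), ρ q ∂νT
        = ∫⁻ q, ρ q ∂((volume.restrict A).prod ν) := by rw [hres]
      _ = ∫⁻ s in A, Φ s ∂volume := MeasureTheory.lintegral_prod ρ hρmeas.aemeasurable
      _ = ∫⁻ s in A, Φ s ∂(volume.restrict (Set.Icc (0 : ℝ) T)) := by rw [hrr]
      _ ≤ ENNReal.ofReal (η / 2) := hsmall.le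
  calc ∫⁻ q in A ×ˢ (Set.univ : Set 𝕏), ENNReal.ofReal (|h q| * |g q - 1|) ∂νT
      ≤ ∫⁻ q in A ×ˢ (Set.univ : Set 𝕏),
          (ENNReal.ofReal (σ⁻¹ * (g q * Real.log (g q) - g q + 1)) + ρ q) ∂νT :=
        lintegral_mono hpt
    _ = (∫⁻ q in A ×ˢ (Set.univ : Set 𝕏),
          ENNReal.ofReal (σ⁻¹ * (g q * Real.log (g q) - g q + 1)) ∂νT)
        + ∫⁻ q in A ×ˢ (Set.univ : Set 𝕏), ρ q ∂νT := lintegral_add_left hf1meas _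
    _ ≤ ENNReal.ofReal (η / 2) + ENNReal.ofReal (η / 2) := add_le_add hI1 hI2
    _ = ENNReal.ofReal η := by
        rw [← ENNReal.ofReal_add (by positivity) (by positivity)]
        norm_num
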